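/- Assume the value semigroup Γ = ν(R \ {0}) is symmetric, i.e. c = 2δ. Then for every standard R-submodule M ⊆ O, the conductor of M satisfies c_M ≤ c − dev(M). -/

import Mathlib

open PowerSeries

/-- `ν f = n` : the order of the power series `f` equals `n`. -/
def HasOrd {k : Type*} [Semiring k] (f : PowerSeries k) (n : ℕ) : Prop :=
  PowerSeries.coeff n f ≠ 0 ∧ ∀ m < n, PowerSeries.coeff m f = 0

/-- The set of orders of the nonzero elements of `S ⊆ k[[z]]`. -/
def ValSet {k : Type*} [Semiring k] (S : Set (PowerSeries k)) : Set ℕ :=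
  {n | ∃ f ∈ S, HasOrd f n}

section Aux

variable {k : Type*} [Field k]

lemma hasOrd_X_pow (n : ℕ) : HasOrd ((X : PowerSeries k) ^ n) n := by
  constructor
  · simp [PowerSeries.coeff_X_pow]
  · intro j hj
    simp [PowerSeries.coeff_X_pow, Nat.ne_of_lt hj]

lemma hasOrd_mul {f g : PowerSeries k} {a b : ℕ} (hf : HasOrd f a) (hg : HasOrd g b) :
    HasOrd (f * g) (a + b) := by
  constructor
  · rw [PowerSeries.coeff_mul, Finset.sum_eq_single (a, b)]
    · exact mul_ne_zero hf.1 hg.1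
    · rintro ⟨i, j⟩ h1 h2
      rw [Finset.HasAntidiagonal.mem_antidiagonal] at h1
      have h2' : ¬(i = a ∧ j = b) := fun ⟨ha, hb⟩ => h2 (by rw [ha, hb])
      rcases lt_or_ge i a with h | h
      · rw [hf.2 i h, zero_mul]
      · rw [hg.2 j (by omega), mul_zero]
    · intro h
      exact absurd (by simp : (a, b) ∈ Finset.HasAntidiagonal.antidiagonal (a + b)) h
  · intro n hn
    rw [PowerSeries.coeff_mul]
    apply Finset.sum_eq_zero
    rintro ⟨i, j⟩ h1
    rw [Finset.HasAntidiagonal.mem_antidiagonal] at h1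
    rcases lt_or_ge i a with h | h
    · rw [hf.2 i h, zero_mul]
    · rw [hg.2 j (by omega), mul_zero]

lemma hasOrd_factor {f : PowerSeries k} {n : ℕ} (hf : HasOrd f n) :
    ∃ u : PowerSeries k, PowerSeries.constantCoeff u ≠ 0 ∧ f = X ^ n * u := by
  obtain ⟨u, hu⟩ := (PowerSeries.X_pow_dvd_iff).2 hf.2
  refine ⟨u, fun h0 => ?_, hu⟩
  apply hf.1
  have h1 : (PowerSeries.coeff n) ((X : PowerSeries k) ^ n * u) = PowerSeries.coeff 0 u := by
    simpa using PowerSeries.coeff_X_pow_mul u n 0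
  rw [hu, h1, PowerSeries.coeff_zero_eq_constantCoeff_apply, h0]

lemma coeff_sum_smul_X_pow (s : Finset ℕ) (G : ℕ → k) (j : ℕ) :
    PowerSeries.coeff j (∑ n ∈ s, G n • (X : PowerSeries k) ^ n)
      = if j ∈ s then G j else 0 := by
  classical
  rw [map_sum, ← Finset.sum_ite_eq s j G]
  refine Finset.sum_congr rfl fun n _ => ?_
  rw [map_smul, PowerSeries.coeff_X_pow, smul_eq_mul, mul_ite, mul_one, mul_zero]

lemma gaps_coeff_zero {M : Submodule k (PowerSeries k)} {s : Finset ℕ} {G : ℕ → k}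
    (hs : ∀ n ∈ s, n ∉ ValSet (M : Set (PowerSeries k)))
    (hmem : (∑ n ∈ s, G n • (X : PowerSeries k) ^ n) ∈ M) :
    ∀ n ∈ s, G n = 0 := by
  classical
  by_contra hcon
  push_neg at hcon
  obtain ⟨n, hns, hGn⟩ := hcon
  set t := s.filter (fun n => G n ≠ 0) with ht
  have htne : t.Nonempty := ⟨n, Finset.mem_filter.2 ⟨hns, hGn⟩⟩
  set n₀ := t.min' htne with hn₀
  have hn₀t : n₀ ∈ t := t.min'_mem htne
  have hn₀s : n₀ ∈ s := (Finset.mem_filter.1 hn₀t).1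
  apply hs n₀ hn₀s
  refine ⟨_, hmem, ?_, ?_⟩
  · rw [coeff_sum_smul_X_pow, if_pos hn₀s]
    exact (Finset.mem_filter.1 hn₀t).2
  · intro j hj
    rw [coeff_sum_smul_X_pow]
    by_cases hjs : j ∈ s
    · rw [if_pos hjs]
      by_contra hGj
      exact absurd (t.min'_le j (Finset.mem_filter.2 ⟨hjs, hGj⟩)) (by omega)
    · rw [if_neg hjs]

/-- The purely combinatorial core: for a symmetric semigroup `Γ` with conductor `c` and genus `δ`,
and a `Γ`-module `Δ ⊇ Γ` with conductor `e`, we have `e + δ ≤ c + |ℕ \ Δ|`. -/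
lemma comb_core (Γ Δ : Set ℕ) (c e δ : ℕ)
    (hc : ∀ n, c ≤ n → n ∈ Γ) (hcmin : ∀ c', (∀ n, c' ≤ n → n ∈ Γ) → c ≤ c')
    (he : ∀ n, e ≤ n → n ∈ Δ) (hemin : ∀ e', (∀ n, e' ≤ n → n ∈ Δ) → e ≤ e')
    (hsub : Γ ⊆ Δ)
    (hadd : ∀ a ∈ Γ, ∀ b ∈ Γ, a + b ∈ Γ)
    (hmod : ∀ a ∈ Γ, ∀ b ∈ Δ, a + b ∈ Δ)
    (hδ : Γᶜ.ncard = δ) (hsym : c = 2 * δ) :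
    e + δ ≤ c + (Δᶜ).ncard := by
  classical
  have hGapΓ : ∀ n, n ∉ Γ → n < c := by
    intro n hn
    by_contra h
    exact hn (hc n (by omega))
  have hGapΔ : ∀ n, n ∉ Δ → n < e := by
    intro n hn
    by_contra h
    exact hn (he n (by omega))
  have hec : e ≤ c := hemin c fun n hn => hsub (hc n hn)
  set G := (Finset.range c).filter (fun n => n ∉ Γ) with hGdef
  set A := (Finset.range c).filter (fun n => n ∈ Γ) with hAdef
  have hGset : Γᶜ = ↑G := by
    ext n
    simp only [Set.mem_compl_iff, hGdef, Finset.coe_filter, Set.mem_setOf_eq, Finset.mem_range]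
    exact ⟨fun h => ⟨hGapΓ n h, h⟩, fun h => h.2⟩
  have hGcard : G.card = δ := by rw [← hδ, hGset, Set.ncard_coe_finset]
  have hAG : A.card + G.card = c := by
    have := Finset.card_filter_add_card_filter_not
      (s := Finset.range c) (p := fun n => n ∈ Γ)
    rw [Finset.card_range] at this
    exact this
  have hAcard : A.card = δ := by omega
  have hc1 : 0 < c → c - 1 ∉ Γ := by
    intro hc0 h
    have : c ≤ c - 1 := by
      apply hcmin
      intro n hn
      rcases Nat.eq_or_lt_of_le hn with h' | h'
      · rwa [← h']
      · exact hc n (by omega)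
    omega
  have hsymm : ∀ g, g < c → g ∉ Γ → c - 1 - g ∈ Γ := by
    intro g hg hgΓ
    have hc0 : 0 < c := by omega
    have himg : A.image (fun x => c - 1 - x) ⊆ G := by
      intro y hy
      obtain ⟨x, hxA, rfl⟩ := Finset.mem_image.1 hy
      rw [hAdef, Finset.mem_filter, Finset.mem_range] at hxA
      refine Finset.mem_filter.2 ⟨Finset.mem_range.2 (by omega), fun hyΓ => ?_⟩
      have h2 := hadd x hxA.2 _ hyΓ
      rw [show x + (c - 1 - x) = c - 1 by omega] at h2
      exact hc1 hc0 h2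
    have hinj : Set.InjOn (fun x => c - 1 - x) ↑A := by
      intro x hx y hy hxy
      rw [hAdef, Finset.coe_filter, Set.mem_setOf_eq, Finset.mem_range] at hx hy
      simp only at hxy
      omega
    have hcardimg : (A.image (fun x => c - 1 - x)).card = A.card :=
      Finset.card_image_of_injOn hinj
    have heq : A.image (fun x => c - 1 - x) = G :=
      Finset.eq_of_subset_of_card_le himg (by omega)
    have hgG : g ∈ G := Finset.mem_filter.2 ⟨Finset.mem_range.2 hg, hgΓ⟩
    rw [← heq] at hgG
    obtain ⟨x, hxA, hxg⟩ := Finset.mem_image.1 hgG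
    rw [hAdef, Finset.mem_filter, Finset.mem_range] at hxA
    rw [show c - 1 - g = x by omega]
    exact hxA.2
  set B := (Finset.range e).filter (fun n => n ∈ Δ) with hBdef
  have hB : ∀ x ∈ B, x + (c - e) ∈ Γ := by
    intro x hx
    rw [hBdef, Finset.mem_filter, Finset.mem_range] at hx
    have he1 : 0 < e := by omega
    have heΔ : e - 1 ∉ Δ := by
      intro h
      have : e ≤ e - 1 := by
        apply hemin
        intro n hn
        rcases Nat.eq_or_lt_of_le hn with h' | h'
        · rwa [← h']
        · exact he n (by omega)
      omega
    have h1 : e - 1 - x ∉ Γ := by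
      intro h
      have h2 := hmod _ h x hx.2
      rw [show e - 1 - x + x = e - 1 by omega] at h2
      exact heΔ h2
    have h2 := hsymm (e - 1 - x) (by omega) h1
    rwa [show c - 1 - (e - 1 - x) = x + (c - e) by omega] at h2
  have hBA : B.card ≤ A.card := by
    have himg : B.image (fun x => x + (c - e)) ⊆ A := by
      intro y hy
      obtain ⟨x, hxB, rfl⟩ := Finset.mem_image.1 hy
      have hx' := hxB
      rw [hBdef, Finset.mem_filter, Finset.mem_range] at hx'
      exact Finset.mem_filter.2 ⟨Finset.mem_range.2 (by omega), hB x hxB⟩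
    calc B.card = (B.image (fun x => x + (c - e))).card :=
          (Finset.card_image_of_injOn (fun x _ y _ h => by omega)).symm
      _ ≤ A.card := Finset.card_le_card himg
  set D := (Finset.range c).filter (fun n => n ∈ Δ) with hDdef
  have hD : D = B ∪ Finset.Ico e c := by
    ext n
    rw [hDdef, hBdef, Finset.mem_union, Finset.mem_filter, Finset.mem_filter,
      Finset.mem_range, Finset.mem_range, Finset.mem_Ico]
    constructor
    · rintro ⟨hnc, hnΔ⟩
      by_cases hne : n < e
      · exact Or.inl ⟨hne, hnΔ⟩
      · exact Or.inr ⟨by omega, hnc⟩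
    · rintro (⟨h1, h2⟩ | ⟨h1, h2⟩)
      · exact ⟨by omega, h2⟩
      · exact ⟨h2, he n h1⟩
  have hdisj : Disjoint B (Finset.Ico e c) := by
    rw [Finset.disjoint_left]
    intro a haB haI
    rw [hBdef, Finset.mem_filter, Finset.mem_range] at haB
    rw [Finset.mem_Ico] at haI
    omega
  have hDcard : D.card = B.card + (c - e) := by
    rw [hD, Finset.card_union_of_disjoint hdisj, Nat.card_Ico]
  have hAD : A ⊆ D := by
    intro n hn
    rw [hAdef, Finset.mem_filter] at hn
    exact Finset.mem_filter.2 ⟨hn.1, hsub hn.2⟩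
  have hsd : (D \ A).card + A.card = D.card := Finset.card_sdiff_add_card_eq_card hAD
  set E := (Finset.range e).filter (fun n => n ∉ Δ) with hEdef
  have hEset : Δᶜ = ↑E := by
    ext n
    simp only [Set.mem_compl_iff, hEdef, Finset.coe_filter, Set.mem_setOf_eq, Finset.mem_range]
    exact ⟨fun h => ⟨hGapΔ n h, h⟩, fun h => h.2⟩
  have hEcard : (Δᶜ).ncard = E.card := by rw [hEset, Set.ncard_coe_finset]
  have hGE : G = (D \ A) ∪ E := by
    ext n
    simp only [hGdef, hEdef, hDdef, hAdef, Finset.mem_union, Finset.mem_sdiff,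
      Finset.mem_filter, Finset.mem_range]
    constructor
    · rintro ⟨hnc, hnΓ⟩
      by_cases hnΔ : n ∈ Δ
      · exact Or.inl ⟨⟨hnc, hnΔ⟩, fun h => hnΓ h.2⟩
      · exact Or.inr ⟨hGapΔ n hnΔ, hnΔ⟩
    · rintro (⟨⟨h1, h2⟩, h3⟩ | ⟨h1, h2⟩)
      · exact ⟨h1, fun hΓ => h3 ⟨h1, hΓ⟩⟩
      · exact ⟨by omega, fun hΓ => h2 (hsub hΓ)⟩
  have hdisj2 : Disjoint (D \ A) E := by
    rw [Finset.disjoint_left]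
    intro a ha haE
    rw [Finset.mem_sdiff, hDdef, Finset.mem_filter] at ha
    rw [hEdef, Finset.mem_filter] at haE
    exact haE.2 ha.1.2
  have hGcard2 : G.card = (D \ A).card + E.card := by
    rw [hGE, Finset.card_union_of_disjoint hdisj2]
  rw [hEcard]
  omega

end Aux

/-- Let `R ⊆ O = k[[z]]` be a `k`-subalgebra containing `z^m·O`, with value
semigroup `Γ = ν(R \ {0})`, genus `δ = |ℕ \ Γ|` and conductor `c`.  Assume `Γ` is symmetric,
i.e. `c = 2δ`.  Then every standard `R`-submodule `M ⊆ O` (a `k`-subspace stable under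
multiplication by `R` with `Γ ⊆ Δ_M`) satisfies `c_M ≤ c - dev(M)`, where
`dev(M) = δ - dim_k(O/M)` and `c_M` is the least `c'` with `z^{c'}·O ⊆ M`. -/
theorem conductor_le_of_symmetric
    {k : Type*} [Field k]
    (R : Subalgebra k (PowerSeries k)) (m : ℕ) (hm : 1 ≤ m)
    (hRm : ∀ f : PowerSeries k, PowerSeries.X ^ m * f ∈ R)
    (hsym : sInf {c : ℕ | ∀ n, c ≤ n → n ∈ ValSet (R : Set (PowerSeries k))}
      = 2 * ((ValSet (R : Set (PowerSeries k)))ᶜ).ncard)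
    (M : Submodule k (PowerSeries k))
    (hMR : ∀ r ∈ R, ∀ f ∈ M, r * f ∈ M)
    (hstd : ValSet (R : Set (PowerSeries k)) ⊆ ValSet (M : Set (PowerSeries k))) :
    ((sInf {c : ℕ | ∀ f : PowerSeries k, PowerSeries.X ^ c * f ∈ M} : ℕ) : ℤ)
      ≤ ((sInf {c : ℕ | ∀ n, c ≤ n → n ∈ ValSet (R : Set (PowerSeries k))} : ℕ) : ℤ)
        - ((((ValSet (R : Set (PowerSeries k)))ᶜ).ncard : ℤ)
            - (Module.finrank k (PowerSeries k ⧸ M) : ℤ)) := by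
  classical
  set Γ := ValSet (R : Set (PowerSeries k)) with hΓdef
  set Δ := ValSet (M : Set (PowerSeries k)) with hΔdef
  -- Γ contains all n ≥ m
  have hΓm : ∀ n, m ≤ n → n ∈ Γ := by
    intro n hn
    refine ⟨X ^ m * X ^ (n - m), hRm _, ?_⟩
    rw [← pow_add, Nat.add_sub_cancel' hn]
    exact hasOrd_X_pow n
  set c := sInf {c : ℕ | ∀ n, c ≤ n → n ∈ Γ} with hcdef
  have hneΓ : {c : ℕ | ∀ n, c ≤ n → n ∈ Γ}.Nonempty := ⟨m, hΓm⟩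
  have hc : ∀ n, c ≤ n → n ∈ Γ := Nat.sInf_mem hneΓ
  have hcmin : ∀ c', (∀ n, c' ≤ n → n ∈ Γ) → c ≤ c' := fun c' h => Nat.sInf_le h
  set e := sInf {c : ℕ | ∀ n, c ≤ n → n ∈ Δ} with hedef
  have hneΔ : {c : ℕ | ∀ n, c ≤ n → n ∈ Δ}.Nonempty := ⟨c, fun n hn => hstd (hc n hn)⟩
  have he : ∀ n, e ≤ n → n ∈ Δ := Nat.sInf_mem hneΔ
  have hemin : ∀ e', (∀ n, e' ≤ n → n ∈ Δ) → e ≤ e' := fun e' h => Nat.sInf_le h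
  -- Γ is additively closed, and Γ + Δ ⊆ Δ
  have hΓadd : ∀ a ∈ Γ, ∀ b ∈ Γ, a + b ∈ Γ := by
    rintro a ⟨f, hfR, hf⟩ b ⟨g, hgR, hg⟩
    exact ⟨f * g, R.mul_mem hfR hgR, hasOrd_mul hf hg⟩
  have hmod : ∀ a ∈ Γ, ∀ b ∈ Δ, a + b ∈ Δ := by
    rintro a ⟨f, hfR, hf⟩ b ⟨g, hgM, hg⟩
    exact ⟨f * g, hMR f hfR g hgM, hasOrd_mul hf hg⟩
  -- z^(2m)·O ⊆ M
  have hK : ∀ h : PowerSeries k, (X : PowerSeries k) ^ (m + m) * h ∈ M := by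
    have hmΔ : m ∈ Δ := hstd (hΓm m le_rfl)
    obtain ⟨g, hgM, hgord⟩ := hmΔ
    obtain ⟨u, hu0, hgu⟩ := hasOrd_factor hgord
    intro h
    have hmem := hMR _ (hRm (h * u⁻¹)) g hgM
    rw [hgu] at hmem
    have heq : (X : PowerSeries k) ^ m * (h * u⁻¹) * (X ^ m * u) = X ^ (m + m) * h := by
      have h1 : (X : PowerSeries k) ^ m * (h * u⁻¹) * (X ^ m * u)
          = X ^ (m + m) * h * (u⁻¹ * u) := by
        rw [pow_add]; ring
      rw [h1, PowerSeries.inv_mul_cancel u hu0, mul_one]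
    rwa [heq] at hmem
  -- descent: X^e'·O ⊆ M whenever e' is beyond the conductor of Δ
  have hstep : ∀ j : ℕ, ∀ e' : ℕ, (∀ n, e' ≤ n → n ∈ Δ) → m + m ≤ e' + j →
      ∀ f : PowerSeries k, (X : PowerSeries k) ^ e' * f ∈ M := by
    intro j
    induction j with
    | zero =>
      intro e' _ hle f
      have heq : (X : PowerSeries k) ^ e' * f = X ^ (m + m) * (X ^ (e' - (m + m)) * f) := by
        rw [← mul_assoc, ← pow_add, Nat.add_sub_cancel' (by omega)]
      rw [heq]
      exact hK _
    | succ j ih =>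
      intro e' he' hle f
      by_cases h0 : PowerSeries.constantCoeff f = 0
      · obtain ⟨f', hf'⟩ := (PowerSeries.X_dvd_iff).2 h0
        rw [hf', ← mul_assoc, ← pow_succ]
        exact ih (e' + 1) (fun n hn => he' n (by omega)) (by omega) f'
      · obtain ⟨g, hgM, hgord⟩ := he' e' le_rfl
        obtain ⟨u, hu0, hgu⟩ := hasOrd_factor hgord
        set d : k := PowerSeries.constantCoeff f * (PowerSeries.constantCoeff u)⁻¹ with hd
        have hsub0 : PowerSeries.constantCoeff (f - d • u) = 0 := by
          have h1 : PowerSeries.constantCoeff (d • u)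
              = d * PowerSeries.constantCoeff u := by simp
          rw [map_sub, h1, hd, mul_assoc, inv_mul_cancel₀ hu0, mul_one, sub_self]
        obtain ⟨f₂, hf₂⟩ := (PowerSeries.X_dvd_iff).2 hsub0
        have hfrepr : f = d • u + X * f₂ := by rw [← hf₂]; abel
        have hrepr : (X : PowerSeries k) ^ e' * f = d • g + X ^ (e' + 1) * f₂ := by
          rw [hfrepr, hgu, smul_eq_C_mul, smul_eq_C_mul, pow_succ]
          ring
        rw [hrepr]
        exact M.add_mem (M.smul_mem d hgM)
          (ih (e' + 1) (fun n hn => he' n (by omega)) (by omega) f₂)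
  -- c_M ≤ e
  have hcM : sInf {c : ℕ | ∀ f : PowerSeries k, PowerSeries.X ^ c * f ∈ M} ≤ e :=
    Nat.sInf_le (hstep (m + m) e he (by omega))
  -- O/M is finite dimensional
  have hfin : Module.Finite k (PowerSeries k ⧸ M) := by
    let ψ : (Fin (m + m) → k) →ₗ[k] PowerSeries k :=
      { toFun := fun g => ∑ i : Fin (m + m), g i • (X : PowerSeries k) ^ (i : ℕ)
        map_add' := fun x y => by simp [add_smul, Finset.sum_add_distrib]
        map_smul' := fun a x => by simp [smul_smul, Finset.smul_sum] }
    refine Module.Finite.of_surjective (M.mkQ.comp ψ) fun y => ?_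
    obtain ⟨f, rfl⟩ := M.mkQ_surjective y
    refine ⟨fun i => PowerSeries.coeff i f, ?_⟩
    have hψ : ψ (fun i => PowerSeries.coeff i f)
        = ∑ n ∈ Finset.range (m + m), PowerSeries.coeff n f • (X : PowerSeries k) ^ n :=
      Fin.sum_univ_eq_sum_range
        (fun n => PowerSeries.coeff n f • (X : PowerSeries k) ^ n) (m + m)
    rw [LinearMap.comp_apply, hψ, Submodule.mkQ_apply, Submodule.mkQ_apply,
      Submodule.Quotient.eq]
    have hdvd : (X : PowerSeries k) ^ (m + m)
        ∣ (f - ∑ n ∈ Finset.range (m + m), PowerSeries.coeff n f • (X : PowerSeries k) ^ n) := by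
      rw [PowerSeries.X_pow_dvd_iff]
      intro j hj
      rw [map_sub, coeff_sum_smul_X_pow, if_pos (Finset.mem_range.2 hj), sub_self]
    obtain ⟨h, hh⟩ := hdvd
    have h2 : (∑ n ∈ Finset.range (m + m), PowerSeries.coeff n f • (X : PowerSeries k) ^ n) - f
        = X ^ (m + m) * (-h) := by
      rw [mul_neg, ← hh, neg_sub]
    rw [h2]
    exact hK (-h)
  -- the gaps of Δ give linearly independent elements of O/M
  set E := (Finset.range e).filter (fun n => n ∉ Δ) with hEdef
  have hEfr : E.card ≤ Module.finrank k (PowerSeries k ⧸ M) := by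
    have hli : LinearIndependent k
        (fun i : {x // x ∈ E} => Submodule.Quotient.mk (p := M) ((X : PowerSeries k) ^ (i : ℕ))) := by
      rw [Fintype.linearIndependent_iff]
      intro g hg
      set G : ℕ → k := fun n => if hn : n ∈ E then g ⟨n, hn⟩ else 0 with hG
      have hsum : ∑ i : {x // x ∈ E}, g i • (X : PowerSeries k) ^ (i : ℕ)
          = ∑ n ∈ E, G n • (X : PowerSeries k) ^ n := by
        rw [← Finset.sum_coe_sort E (fun n => G n • (X : PowerSeries k) ^ n)]
        refine Finset.sum_congr rfl fun i _ => ?_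
        rw [hG]
        simp [i.2]
      have hmk : Submodule.Quotient.mk (p := M) (∑ i : {x // x ∈ E}, g i • (X : PowerSeries k) ^ (i : ℕ))
          = ∑ i : {x // x ∈ E}, g i • Submodule.Quotient.mk (p := M) ((X : PowerSeries k) ^ (i : ℕ)) := by
        rw [← Submodule.mkQ_apply, map_sum]
        simp only [map_smul, Submodule.mkQ_apply]
      have hmem : (∑ n ∈ E, G n • (X : PowerSeries k) ^ n) ∈ M := by
        rw [← hsum, ← Submodule.Quotient.mk_eq_zero M, hmk, hg]
      have hzero := gaps_coeff_zero (M := M)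
        (fun n hn => by rw [hEdef, Finset.mem_filter] at hn; exact hn.2) hmem
      intro i
      have := hzero i i.2
      rw [hG] at this
      simpa [i.2] using this
    have hcard := hli.fintype_card_le_finrank
    rwa [Fintype.card_coe] at hcard
  -- the combinatorial inequality
  have hcomb : e + (Γᶜ).ncard ≤ c + (Δᶜ).ncard :=
    comb_core Γ Δ c e (Γᶜ).ncard hc hcmin he hemin hstd hΓadd hmod rfl hsym
  have hGapΔ : ∀ n, n ∉ Δ → n < e := by
    intro n hn
    by_contra h
    exact hn (he n (by omega))
  have hEcompl : (Δᶜ).ncard = E.card := by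
    have hEset : Δᶜ = ↑E := by
      ext n
      simp only [Set.mem_compl_iff, hEdef, Finset.coe_filter, Set.mem_setOf_eq, Finset.mem_range]
      exact ⟨fun h => ⟨hGapΔ n h, h⟩, fun h => h.2⟩
    rw [hEset, Set.ncard_coe_finset]
  rw [hEcompl] at hcomb
  omega
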